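/- Let α ∈ (0,1), β > 0 and a₂ > a₁ > 0, b₂ > b₁ > 0 satisfy a₂b₁ = a₁b₂ (restriction (T1)), the strict restriction a₂ > 2b₂·cosh(βπ/2)·√(1 + cot²(απ/2)·tanh²(βπ/2)) (strict (T2₂)), and a_i ≥ 2b_i·cosh(βπ/2)·√(1 + tan²(απ/2)·tanh²(βπ/2)) for i = 1,2 (restrictions (T3₁), (T3₂)). Then for every ω > 0, the quantity M²(iω) = Q(iω)/P(iω) satisfies Re M²(iω) > 0 and Im M²(iω) < 0, and its principal square root M(iω) = (Q(iω)/P(iω))^{1/2} satisfies Re M(iω) > 0 and Im M(iω) < 0. -/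

import Mathlib

/-- `φ_{a,b}(s) = 1 + a·s^α + b·(s^{α+iβ} + s^{α−iβ})`, with principal complex powers. -/
noncomputable def phi (α β a b : ℝ) (s : ℂ) : ℂ :=
  1 + (a : ℂ) * s ^ (α : ℂ) +
    (b : ℂ) * (s ^ ((α : ℂ) + Complex.I * (β : ℂ)) + s ^ ((α : ℂ) - Complex.I * (β : ℂ)))

/-- The constant `cosh(βπ/2)·√(1 + cot²(απ/2)·tanh²(βπ/2))` appearing in restrictions (T2). -/
noncomputable def Ccot (α β : ℝ) : ℝ :=
  Real.cosh (β * (Real.pi / 2)) *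
    Real.sqrt (1 + (Real.cot (α * (Real.pi / 2)) * Real.tanh (β * (Real.pi / 2))) ^ 2)

/-- The constant `cosh(βπ/2)·√(1 + tan²(απ/2)·tanh²(βπ/2))` appearing in restrictions (T3). -/
noncomputable def Ctan (α β : ℝ) : ℝ :=
  Real.cosh (β * (Real.pi / 2)) *
    Real.sqrt (1 + (Real.tan (α * (Real.pi / 2)) * Real.tanh (β * (Real.pi / 2))) ^ 2)

lemma cpow_key (ω x y : ℝ) (hω : 0 < ω) :
    (Complex.I * (ω : ℂ)) ^ ((x : ℂ) + (y : ℂ) * Complex.I) =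
      (Real.exp (x * Real.log ω - y * (Real.pi / 2)) : ℂ) *
        Complex.exp (((y * Real.log ω + x * (Real.pi / 2) : ℝ) : ℂ) * Complex.I) := by
  have hz : Complex.I * (ω : ℂ) ≠ 0 := by
    simp [Complex.I_ne_zero, Complex.ofReal_ne_zero, hω.ne']
  have harg : (Complex.I * (ω : ℂ)).arg = Real.pi / 2 := by
    rw [mul_comm, Complex.arg_real_mul _ hω, Complex.arg_I]
  have habs : ‖Complex.I * (ω : ℂ)‖ = ω := by
    simp [abs_of_pos hω]
  have hlog : Complex.log (Complex.I * (ω : ℂ)) =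
      ((Real.log ω : ℝ) : ℂ) + ((Real.pi / 2 : ℝ) : ℂ) * Complex.I := by
    apply Complex.ext <;> simp [Complex.log_re, Complex.log_im, habs, harg]
  rw [Complex.cpow_def_of_ne_zero hz, hlog,
    show ((Real.exp (x * Real.log ω - y * (Real.pi/2)) : ℝ) : ℂ) =
      Complex.exp ((x * Real.log ω - y * (Real.pi/2) : ℝ) : ℂ) from (Complex.ofReal_exp _),
    ← Complex.exp_add]
  congr 1
  push_cast
  linear_combination (y * (Real.pi / 2) : ℂ) * Complex.I_sq

lemma phi_re_im (α β a b ω : ℝ) (hω : 0 < ω) :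
    (phi α β a b (Complex.I * (ω : ℂ))).re =
      1 + Real.exp (α * Real.log ω) *
        (a * Real.cos (α * (Real.pi / 2)) +
          b * (Real.exp (-(β * (Real.pi / 2))) *
                Real.cos (α * (Real.pi / 2) + β * Real.log ω) +
              Real.exp (β * (Real.pi / 2)) *
                Real.cos (α * (Real.pi / 2) - β * Real.log ω))) ∧
    (phi α β a b (Complex.I * (ω : ℂ))).im =
      Real.exp (α * Real.log ω) *
        (a * Real.sin (α * (Real.pi / 2)) +
          b * (Real.exp (-(β * (Real.pi / 2))) *
                Real.sin (α * (Real.pi / 2) + β * Real.log ω) +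
              Real.exp (β * (Real.pi / 2)) *
                Real.sin (α * (Real.pi / 2) - β * Real.log ω))) := by
  have e0 : (α : ℂ) = ((α : ℝ) : ℂ) + ((0 : ℝ) : ℂ) * Complex.I := by push_cast; ring
  have ep : (α : ℂ) + Complex.I * (β : ℂ) = ((α : ℝ) : ℂ) + ((β : ℝ) : ℂ) * Complex.I := by ring
  have em : (α : ℂ) - Complex.I * (β : ℂ) = ((α : ℝ) : ℂ) + ((-β : ℝ) : ℂ) * Complex.I := by
    push_cast; ring
  have k0 := cpow_key ω α 0 hω
  have kp := cpow_key ω α β hω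
  have km := cpow_key ω α (-β) hω
  rw [← e0] at k0
  rw [← ep] at kp
  rw [← em] at km
  rw [phi, k0, kp, km]
  constructor <;>
  · simp only [Complex.add_re, Complex.add_im, Complex.one_re, Complex.one_im,
      Complex.re_ofReal_mul, Complex.im_ofReal_mul, Complex.exp_ofReal_mul_I_re,
      Complex.exp_ofReal_mul_I_im]
    rw [show α * Real.log ω - 0 * (Real.pi/2) = α * Real.log ω by ring,
      show (0:ℝ) * Real.log ω + α * (Real.pi/2) = α * (Real.pi/2) by ring,
      show α * Real.log ω - β * (Real.pi/2) = α * Real.log ω + -(β * (Real.pi/2)) by ring,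
      show α * Real.log ω - (-β) * (Real.pi/2) = α * Real.log ω + β * (Real.pi/2) by ring,
      show β * Real.log ω + α * (Real.pi/2) = α * (Real.pi/2) + β * Real.log ω by ring,
      show (-β) * Real.log ω + α * (Real.pi/2) = α * (Real.pi/2) - β * Real.log ω by ring,
      Real.exp_add, Real.exp_add]
    ring

lemma ampA (α β a b t : ℝ) (hα1 : 0 < α) (hα2 : α < 1) (hb : 0 < b)
    (hT : 2 * b * Ctan α β ≤ a) :
    0 ≤ a * Real.cos (α * (Real.pi / 2)) +
      b * (Real.exp (-(β * (Real.pi / 2))) * Real.cos (α * (Real.pi / 2) + t) +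
           Real.exp (β * (Real.pi / 2)) * Real.cos (α * (Real.pi / 2) - t)) := by
  set θ := α * (Real.pi / 2) with hθ
  set h := β * (Real.pi / 2) with hh
  have hπ := Real.pi_pos
  have hθ1 : 0 < θ := by rw [hθ]; positivity
  have hθ2 : θ < Real.pi / 2 := by rw [hθ]; nlinarith
  have hcos : 0 < Real.cos θ := Real.cos_pos_of_mem_Ioo ⟨by linarith, hθ2⟩
  have hsin : 0 < Real.sin θ := Real.sin_pos_of_pos_of_lt_pi hθ1 (by linarith)
  have hchpos : 0 < Real.cosh h := Real.cosh_pos h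
  set c := 2 * b * Real.cosh h * Real.cos θ with hc
  set d := 2 * b * Real.sinh h * Real.sin θ with hd
  set S := 2 * b * Real.cos θ * Ctan α β with hS
  have hsq : (0:ℝ) ≤ 1 + (Real.tan θ * Real.tanh h) ^ 2 := by positivity
  have key : Real.cos θ ^ 2 * Ctan α β ^ 2 =
      Real.cos θ ^ 2 * Real.cosh h ^ 2 + Real.sin θ ^ 2 * Real.sinh h ^ 2 := by
    rw [Ctan, ← hθ, ← hh, mul_pow, Real.sq_sqrt hsq, Real.tan_eq_sin_div_cos,
      Real.tanh_eq_sinh_div_cosh]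
    field_simp
  have hS2 : S ^ 2 = c ^ 2 + d ^ 2 := by
    rw [hS, hc, hd]; linear_combination 4 * b ^ 2 * key
  have hSpos : 0 < S := by
    rw [hS, Ctan, ← hθ, ← hh]
    have : 0 < Real.sqrt (1 + (Real.tan θ * Real.tanh h) ^ 2) :=
      Real.sqrt_pos.2 (by positivity)
    positivity
  have haS : S ≤ a * Real.cos θ := by
    rw [hS]; nlinarith
  have hexp : b * (Real.exp (-h) * Real.cos (θ + t) + Real.exp h * Real.cos (θ - t)) =
      c * Real.cos t + d * Real.sin t := by
    rw [hc, hd, Real.cos_add, Real.cos_sub, Real.cosh_eq, Real.sinh_eq]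
    ring
  have hmain : 0 ≤ a * Real.cos θ + (c * Real.cos t + d * Real.sin t) := by
    nlinarith [Real.sin_sq_add_cos_sq t, sq_nonneg (c * Real.sin t - d * Real.cos t),
      sq_nonneg (c * Real.cos t + d * Real.sin t + S), hS2, hSpos, haS]
  linarith [hexp, hmain]

lemma ampB (α β a b t : ℝ) (hα1 : 0 < α) (hα2 : α < 1) (hb : 0 < b)
    (hT : 2 * b * Ccot α β < a) :
    0 < a * Real.sin (α * (Real.pi / 2)) +
      b * (Real.exp (-(β * (Real.pi / 2))) * Real.sin (α * (Real.pi / 2) + t) +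
           Real.exp (β * (Real.pi / 2)) * Real.sin (α * (Real.pi / 2) - t)) := by
  set θ := α * (Real.pi / 2) with hθ
  set h := β * (Real.pi / 2) with hh
  have hπ := Real.pi_pos
  have hθ1 : 0 < θ := by rw [hθ]; positivity
  have hθ2 : θ < Real.pi / 2 := by rw [hθ]; nlinarith
  have hcos : 0 < Real.cos θ := Real.cos_pos_of_mem_Ioo ⟨by linarith, hθ2⟩
  have hsin : 0 < Real.sin θ := Real.sin_pos_of_pos_of_lt_pi hθ1 (by linarith)
  have hchpos : 0 < Real.cosh h := Real.cosh_pos h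
  set c := 2 * b * Real.cosh h * Real.sin θ with hc
  set d := 2 * b * Real.sinh h * Real.cos θ with hd
  set S := 2 * b * Real.sin θ * Ccot α β with hS
  have hsq : (0:ℝ) ≤ 1 + (Real.cot θ * Real.tanh h) ^ 2 := by positivity
  have key : Real.sin θ ^ 2 * Ccot α β ^ 2 =
      Real.sin θ ^ 2 * Real.cosh h ^ 2 + Real.cos θ ^ 2 * Real.sinh h ^ 2 := by
    rw [Ccot, ← hθ, ← hh, mul_pow, Real.sq_sqrt hsq, Real.cot_eq_cos_div_sin,
      Real.tanh_eq_sinh_div_cosh]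
    field_simp
  have hS2 : S ^ 2 = c ^ 2 + d ^ 2 := by
    rw [hS, hc, hd]; linear_combination 4 * b ^ 2 * key
  have hSpos : 0 < S := by
    rw [hS, Ccot, ← hθ, ← hh]
    have : 0 < Real.sqrt (1 + (Real.cot θ * Real.tanh h) ^ 2) :=
      Real.sqrt_pos.2 (by positivity)
    positivity
  have haS : S < a * Real.sin θ := by
    rw [hS]; nlinarith
  have hexp : b * (Real.exp (-h) * Real.sin (θ + t) + Real.exp h * Real.sin (θ - t)) =
      c * Real.cos t - d * Real.sin t := by
    rw [hc, hd, Real.sin_add, Real.sin_sub, Real.cosh_eq, Real.sinh_eq]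
    ring
  have hmain : 0 < a * Real.sin θ + (c * Real.cos t - d * Real.sin t) := by
    nlinarith [Real.sin_sq_add_cos_sq t, sq_nonneg (c * Real.sin t + d * Real.cos t),
      sq_nonneg (c * Real.cos t - d * Real.sin t + S), hS2, hSpos, haS]
  linarith [hexp, hmain]

lemma sqrt_half {z : ℂ} (hre : 0 < z.re) (him : z.im < 0) :
    0 < (z ^ ((1 : ℂ) / 2)).re ∧ (z ^ ((1 : ℂ) / 2)).im < 0 := by
  have hπ := Real.pi_pos
  have hz : z ≠ 0 := by
    intro hc; rw [hc] at hre; simp at hre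
  have harg1 : z.arg < 0 := Complex.arg_neg_iff.2 him
  have harg2 : -(Real.pi / 2) < z.arg :=
    (abs_lt.1 (Complex.abs_arg_lt_pi_div_two_iff.2 (Or.inl hre))).1
  rw [Complex.cpow_def_of_ne_zero hz]
  have him' : (Complex.log z * ((1 : ℂ) / 2)).im = z.arg / 2 := by
    simp [Complex.mul_im, Complex.log_im, Complex.log_re]
    ring
  constructor
  · rw [Complex.exp_re, him']
    have hc : 0 < Real.cos (z.arg / 2) :=
      Real.cos_pos_of_mem_Ioo ⟨by linarith, by linarith⟩
    positivity
  · rw [Complex.exp_im, him']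
    have hs : Real.sin (z.arg / 2) < 0 :=
      Real.sin_neg_of_neg_of_neg_pi_lt (by linarith) (by linarith)
    exact mul_neg_of_pos_of_neg (Real.exp_pos _) hs

set_option maxHeartbeats 1000000 in
/-- Under `a₂ > a₁ > 0`, `b₂ > b₁ > 0`, (T1), strict (T2₂) and (T3₁), (T3₂): for every
`ω > 0`, `M²(iω) = Q(iω)/P(iω)` has positive real part and negative imaginary part, and so
does its principal square root `M(iω) = (Q(iω)/P(iω))^{1/2}`. -/
theorem stmt_18 (α β a₁ a₂ b₁ b₂ : ℝ) (hα : α ∈ Set.Ioo (0:ℝ) 1) (hβ : 0 < β)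
    (ha₁ : 0 < a₁) (ha : a₁ < a₂) (hb₁ : 0 < b₁) (hb : b₁ < b₂)
    (hT1 : a₂ * b₁ = a₁ * b₂) (hT2s : a₂ > 2 * b₂ * Ccot α β)
    (hT3₁ : a₁ ≥ 2 * b₁ * Ctan α β) (hT3₂ : a₂ ≥ 2 * b₂ * Ctan α β) :
    ∀ ω : ℝ, 0 < ω →
      0 < (phi α β a₁ b₁ (Complex.I * (ω : ℂ)) / phi α β a₂ b₂ (Complex.I * (ω : ℂ))).re ∧
      (phi α β a₁ b₁ (Complex.I * (ω : ℂ)) / phi α β a₂ b₂ (Complex.I * (ω : ℂ))).im < 0 ∧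
      0 < ((phi α β a₁ b₁ (Complex.I * (ω : ℂ)) / phi α β a₂ b₂ (Complex.I * (ω : ℂ))) ^
            ((1 : ℂ) / 2)).re ∧
      ((phi α β a₁ b₁ (Complex.I * (ω : ℂ)) / phi α β a₂ b₂ (Complex.I * (ω : ℂ))) ^
            ((1 : ℂ) / 2)).im < 0 := by
  obtain ⟨hα1, hα2⟩ := hα
  intro ω hω
  have hb₂ : 0 < b₂ := hb₁.trans hb
  obtain ⟨hre₁, him₁⟩ := phi_re_im α β a₁ b₁ ω hω
  obtain ⟨hre₂, him₂⟩ := phi_re_im α β a₂ b₂ ω hω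
  set L := Real.log ω with hL
  set R := Real.exp (α * L) with hRdef
  have hRpos : 0 < R := Real.exp_pos _
  set F := Real.exp (-(β * (Real.pi / 2))) * Real.cos (α * (Real.pi / 2) + β * L) +
      Real.exp (β * (Real.pi / 2)) * Real.cos (α * (Real.pi / 2) - β * L) with hF
  set G := Real.exp (-(β * (Real.pi / 2))) * Real.sin (α * (Real.pi / 2) + β * L) +
      Real.exp (β * (Real.pi / 2)) * Real.sin (α * (Real.pi / 2) - β * L) with hG
  set CO := Real.cos (α * (Real.pi / 2)) with hCO
  set SI := Real.sin (α * (Real.pi / 2)) with hSI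
  have hA₁ : 0 ≤ a₁ * CO + b₁ * F := by
    rw [hCO, hF]; exact ampA α β a₁ b₁ (β * L) hα1 hα2 hb₁ hT3₁
  have hA₂ : 0 ≤ a₂ * CO + b₂ * F := by
    rw [hCO, hF]; exact ampA α β a₂ b₂ (β * L) hα1 hα2 hb₂ hT3₂
  have hB₂ : 0 < a₂ * SI + b₂ * G := by
    rw [hSI, hG]; exact ampB α β a₂ b₂ (β * L) hα1 hα2 hb₂ hT2s
  have hAlin : b₂ * (a₁ * CO + b₁ * F) = b₁ * (a₂ * CO + b₂ * F) := by
    linear_combination (-CO) * hT1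
  have hBlin : b₂ * (a₁ * SI + b₁ * G) = b₁ * (a₂ * SI + b₂ * G) := by
    linear_combination (-SI) * hT1
  have hB₁ : 0 < a₁ * SI + b₁ * G := by
    nlinarith [hBlin, hB₂, mul_pos hb₁ hB₂]
  have hBdiff : a₁ * SI + b₁ * G < a₂ * SI + b₂ * G := by
    nlinarith [hBlin, hB₂, mul_pos (sub_pos.2 hb) hB₂]
  have hcross : (a₁ * SI + b₁ * G) * (a₂ * CO + b₂ * F) =
      (a₁ * CO + b₁ * F) * (a₂ * SI + b₂ * G) := by
    apply mul_left_cancel₀ hb₂.ne'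
    linear_combination (a₂ * CO + b₂ * F) * hBlin + (-(a₂ * SI + b₂ * G)) * hAlin
  have hPre : 0 < (phi α β a₂ b₂ (Complex.I * (ω : ℂ))).re := by
    rw [hre₂]; linarith [mul_nonneg hRpos.le hA₂]
  have hPne : phi α β a₂ b₂ (Complex.I * (ω : ℂ)) ≠ 0 := by
    intro hc
    rw [hc] at hPre; simp at hPre
  have hN : 0 < Complex.normSq (phi α β a₂ b₂ (Complex.I * (ω : ℂ))) :=
    Complex.normSq_pos.2 hPne
  have goal1 : 0 < (phi α β a₁ b₁ (Complex.I * (ω : ℂ)) /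
      phi α β a₂ b₂ (Complex.I * (ω : ℂ))).re := by
    rw [Complex.div_re, ← add_div]
    apply div_pos _ hN
    rw [hre₁, him₁, hre₂, him₂]
    nlinarith [mul_nonneg hRpos.le hA₁, mul_nonneg hRpos.le hA₂,
      mul_pos (mul_pos hRpos hB₁) (mul_pos hRpos hB₂),
      mul_nonneg (mul_nonneg hRpos.le hA₁) (mul_nonneg hRpos.le hA₂)]
  have goal2 : (phi α β a₁ b₁ (Complex.I * (ω : ℂ)) /
      phi α β a₂ b₂ (Complex.I * (ω : ℂ))).im < 0 := by
    rw [Complex.div_im, div_sub_div_same]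
    apply div_neg_of_neg_of_pos _ hN
    rw [hre₁, him₁, hre₂, him₂]
    nlinarith [hcross, mul_pos hRpos (sub_pos.2 hBdiff), sq_nonneg R,
      mul_pos hRpos hRpos]
  obtain ⟨goal3, goal4⟩ := sqrt_half goal1 goal2
  exact ⟨goal1, goal2, goal3, goal4⟩
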